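/- Let κ < 0 and λ > 0, and let u be a solution of problem (P) for parameters (κ, λ) with u(x) > 0 for all x ∈ (0,1). Set u₀ := u(1/2). Then the time-map identity √(−κ) · ∫₀¹ u₀ / √(1 − (1 − (λκ/2)·u₀²·(1 − θ²))⁻²) dθ = 1/2 holds; that is, J(λ, u₀) = 1/2. -/

import Mathlib

open Set Real Filter

noncomputable section

/-- `u` is twice continuously differentiable on `[a,b]`, satisfies
`1 + κ (u')² > 0` and the ODE `-u'' = λ u (1 + κ (u')²)^(3/2)` on `[a,b]`. -/
def SolODE (κ lam : ℝ) (u : ℝ → ℝ) (a b : ℝ) : Prop :=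
  (∀ x ∈ Set.Icc a b, DifferentiableAt ℝ u x) ∧
  (∀ x ∈ Set.Icc a b, DifferentiableAt ℝ (deriv u) x) ∧
  ContinuousOn (deriv (deriv u)) (Set.Icc a b) ∧
  (∀ x ∈ Set.Icc a b, 0 < 1 + κ * (deriv u x) ^ 2) ∧
  (∀ x ∈ Set.Icc a b,
    -(deriv (deriv u) x) = lam * u x * (1 + κ * (deriv u x) ^ 2) ^ ((3 : ℝ) / 2))

/-- `u` is a solution of problem (P) on `[0,1]` with Dirichlet boundary conditions. -/
def SolP (κ lam : ℝ) (u : ℝ → ℝ) : Prop :=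
  SolODE κ lam u 0 1 ∧ u 0 = 0 ∧ u 1 = 0

/-- `u` is an `S⁺ₙ`-solution of problem (P): a nontrivial solution with exactly
`n - 1` zeros in `(0,1)`, all zeros in `[0,1]` simple, and positive near `0`. -/
def SPlus (κ lam : ℝ) (n : ℕ) (u : ℝ → ℝ) : Prop :=
  SolP κ lam u ∧
  (∃ x ∈ Set.Icc (0 : ℝ) 1, u x ≠ 0) ∧
  {x ∈ Set.Ioo (0 : ℝ) 1 | u x = 0}.ncard = n - 1 ∧
  (∀ τ ∈ Set.Icc (0 : ℝ) 1, u τ = 0 → deriv u τ ≠ 0) ∧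
  (∃ δ > 0, ∀ x ∈ Set.Ioo (0 : ℝ) δ, 0 < u x)

/-- The constant `B = ∫₀¹ dθ/√(θ⁻⁴ - 1)`. -/
def Bconst : ℝ := ∫ θ in (0 : ℝ)..1, 1 / Real.sqrt ((θ ^ 4)⁻¹ - 1)

/-- The sup-norm of `u` over `[0,1]`. -/
def supNorm (u : ℝ → ℝ) : ℝ := sSup ((fun x => |u x|) '' Set.Icc (0 : ℝ) 1)

/-- The time map `J(λ, ξ) = √(-κ) ∫₀¹ ξ/√(1 - (1 - λκξ²(1-θ²)/2)⁻²) dθ`. -/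
def Jmap (κ lam ξ : ℝ) : ℝ :=
  Real.sqrt (-κ) *
    ∫ θ in (0 : ℝ)..1,
      ξ / Real.sqrt (1 - ((1 - lam * κ / 2 * ξ ^ 2 * (1 - θ ^ 2))⁻¹) ^ 2)

open MeasureTheory intervalIntegral Topology

lemma auxFcont (b M : ℝ) (hb : b < 0) (hM : 0 < M) :
    ContinuousOn (fun θ : ℝ => M / Real.sqrt (1 - ((1 - b * (M ^ 2 - (M * θ) ^ 2))⁻¹) ^ 2))
      (Set.Ioo (-1 : ℝ) 1) := by
  intro θ hθ
  have hθ2 : θ ^ 2 < 1 := by nlinarith [hθ.1, hθ.2]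
  have hMM : 0 < M ^ 2 := by positivity
  have hMθ : (M * θ) ^ 2 < M ^ 2 := by nlinarith
  have hQ1 : 1 < 1 - b * (M ^ 2 - (M * θ) ^ 2) := by
    have h0 : 0 < -b * (M ^ 2 - (M * θ) ^ 2) := mul_pos (by linarith) (by linarith)
    linarith
  have hQ0 : (0:ℝ) < 1 - b * (M ^ 2 - (M * θ) ^ 2) := by linarith
  have hD : 0 < 1 - ((1 - b * (M ^ 2 - (M * θ) ^ 2))⁻¹) ^ 2 := by
    have h1 : (1 - b * (M ^ 2 - (M * θ) ^ 2))⁻¹ < 1 := inv_lt_one_of_one_lt₀ hQ1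
    have h2 : 0 < (1 - b * (M ^ 2 - (M * θ) ^ 2))⁻¹ := inv_pos.2 hQ0
    nlinarith
  apply ContinuousAt.continuousWithinAt
  have hc0 : ContinuousAt (fun θ : ℝ => 1 - b * (M ^ 2 - (M * θ) ^ 2)) θ := by fun_prop
  have hc1 : ContinuousAt (fun θ : ℝ => 1 - ((1 - b * (M ^ 2 - (M * θ) ^ 2))⁻¹) ^ 2) θ :=
    continuousAt_const.sub ((hc0.inv₀ hQ0.ne').pow 2)
  exact continuousAt_const.div hc1.sqrt (Real.sqrt_pos.2 hD).ne'

lemma auxFint (b M : ℝ) (hb : b < 0) (hM : 0 < M) :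
    IntervalIntegrable
      (fun θ : ℝ => M / Real.sqrt (1 - ((1 - b * (M ^ 2 - (M * θ) ^ 2))⁻¹) ^ 2)) volume 0 1 := by
  set C : ℝ := 1 - b * M ^ 2 with hC
  have hMM : 0 < M ^ 2 := by positivity
  have hC1 : 1 < C := by
    have h0 : 0 < -b * M ^ 2 := mul_pos (by linarith) hMM
    rw [hC]; linarith
  have hC0 : (0:ℝ) < C := by linarith
  set L : ℝ := (-b) * M ^ 2 / C with hL
  have hLpos : 0 < L := by
    apply div_pos (by nlinarith) hC0
  set K : ℝ := M / Real.sqrt L with hK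
  have hbnd : IntervalIntegrable (fun θ : ℝ => K * (1 - θ) ^ (-(1:ℝ)/2)) volume 0 1 := by
    have h1 : IntervalIntegrable (fun x : ℝ => x ^ (-(1:ℝ)/2)) volume 1 0 :=
      intervalIntegrable_rpow' (by norm_num)
    have h2 := (h1.comp_sub_left 1).const_mul K
    simpa using h2
  rw [intervalIntegrable_iff_integrableOn_Ioc_of_le zero_le_one] at hbnd ⊢
  have hsub : IntegrableOn (fun θ : ℝ => K * (1 - θ) ^ (-(1:ℝ)/2)) (Ioo 0 1) volume :=
    hbnd.mono_set Ioo_subset_Ioc_self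
  have hmeas : AEStronglyMeasurable
      (fun θ : ℝ => M / Real.sqrt (1 - ((1 - b * (M ^ 2 - (M * θ) ^ 2))⁻¹) ^ 2))
      (volume.restrict (Ioo 0 1)) :=
    ((auxFcont b M hb hM).mono (fun x hx => ⟨by linarith [hx.1], hx.2⟩)).aestronglyMeasurable
      measurableSet_Ioo
  have hIoo : IntegrableOn
      (fun θ : ℝ => M / Real.sqrt (1 - ((1 - b * (M ^ 2 - (M * θ) ^ 2))⁻¹) ^ 2)) (Ioo 0 1) := by
    apply hsub.mono' hmeas
    refine (ae_restrict_iff' measurableSet_Ioo).2 (Filter.Eventually.of_forall ?_)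
    intro θ hθ
    obtain ⟨hθ0, hθ1⟩ := hθ
    set Q : ℝ := 1 - b * (M ^ 2 - (M * θ) ^ 2) with hQdef
    have hMθ : (M * θ) ^ 2 < M ^ 2 := by
      nlinarith [mul_pos hMM (show (0:ℝ) < 1 - θ ^ 2 by nlinarith)]
    have hQ1 : 1 < Q := by
      have h0 : 0 < -b * (M ^ 2 - (M * θ) ^ 2) := mul_pos (by linarith) (by linarith)
      rw [hQdef]; linarith
    have hQC : Q ≤ C := by
      have h0 : 0 ≤ -b * (M * θ) ^ 2 := mul_nonneg (by linarith) (sq_nonneg _)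
      rw [hQdef, hC]; nlinarith
    have hQ0 : (0:ℝ) < Q := by linarith
    have hinv1 : Q⁻¹ < 1 := inv_lt_one_of_one_lt₀ hQ1
    have hinv0 : 0 < Q⁻¹ := inv_pos.2 hQ0
    set D : ℝ := 1 - Q⁻¹ ^ 2 with hDdef
    have hsq' : Q⁻¹ * Q⁻¹ < Q⁻¹ := by nlinarith [mul_lt_mul_of_pos_left hinv1 hinv0]
    have hD0 : 0 < D := by rw [hDdef]; nlinarith
    have h3 : 1 - Q⁻¹ ≤ D := by rw [hDdef]; nlinarith
    have heq1 : 1 - Q⁻¹ = (Q - 1) / Q := by field_simp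
    have h4 : (Q - 1) / C ≤ 1 - Q⁻¹ := by
      rw [heq1]
      apply div_le_div_of_nonneg_left (by linarith) hQ0 hQC
    have h5 : L * (1 - θ) ≤ D := by
      have e1 : (Q - 1) / C = ((-b) * M ^ 2 * (1 - θ ^ 2)) / C := by
        congr 1; rw [hQdef]; ring
      have e2 : L * (1 - θ) ≤ ((-b) * M ^ 2 * (1 - θ ^ 2)) / C := by
        rw [hL, div_mul_eq_mul_div, div_le_div_iff_of_pos_right hC0]
        nlinarith [mul_nonneg (mul_nonneg (show (0:ℝ) ≤ -b by linarith) hMM.le)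
          (mul_nonneg hθ0.le (sub_nonneg.2 hθ1.le))]
      have h4' : -b * M ^ 2 * (1 - θ ^ 2) / C ≤ 1 - Q⁻¹ := by rw [← e1]; exact h4
      exact le_trans e2 (le_trans h4' h3)
    have hLθ : 0 < L * (1 - θ) := by
      apply mul_pos hLpos (by linarith)
    have hsq : Real.sqrt (L * (1 - θ)) ≤ Real.sqrt D := Real.sqrt_le_sqrt h5
    have hsqpos : 0 < Real.sqrt (L * (1 - θ)) := Real.sqrt_pos.2 hLθ
    have hnn : 0 ≤ M / Real.sqrt D := by positivity
    rw [Real.norm_eq_abs, abs_of_nonneg]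
    · calc M / Real.sqrt D ≤ M / Real.sqrt (L * (1 - θ)) :=
            div_le_div_of_nonneg_left hM.le hsqpos hsq
        _ = K * (1 - θ) ^ (-(1:ℝ)/2) := by
            rw [Real.sqrt_mul hLpos.le, hK]
            have hrp : ((1:ℝ) - θ) ^ (-(1:ℝ)/2) = (Real.sqrt (1 - θ))⁻¹ := by
              rw [show (-(1:ℝ)/2) = -(1/2 : ℝ) by norm_num,
                Real.rpow_neg (by linarith), ← Real.sqrt_eq_rpow]
            rw [hrp]
            have hsL : 0 < Real.sqrt L := Real.sqrt_pos.2 hLpos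
            have hs1 : 0 < Real.sqrt (1 - θ) := Real.sqrt_pos.2 (by linarith)
            field_simp
    · exact hnn
  exact hIoo.congr_set_ae Ioo_ae_eq_Ioc.symm

theorem stmt17' (κ lam : ℝ) (hκ : κ < 0) (hlam : 0 < lam) (u : ℝ → ℝ)
    (hdu : ∀ x ∈ Set.Icc (0:ℝ) 1, DifferentiableAt ℝ u x)
    (hdv : ∀ x ∈ Set.Icc (0:ℝ) 1, DifferentiableAt ℝ (deriv u) x)
    (hwpos : ∀ x ∈ Set.Icc (0:ℝ) 1, 0 < 1 + κ * (deriv u x) ^ 2)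
    (hode : ∀ x ∈ Set.Icc (0:ℝ) 1,
      -(deriv (deriv u) x) = lam * u x * (1 + κ * (deriv u x) ^ 2) ^ ((3 : ℝ) / 2))
    (hu0 : u 0 = 0) (hu1 : u 1 = 0)
    (hpos : ∀ x ∈ Set.Ioo (0 : ℝ) 1, 0 < u x) :
    Real.sqrt (-κ) *
      ∫ θ in (0 : ℝ)..1,
        u (1/2) / Real.sqrt (1 - ((1 - lam * κ / 2 * (u (1/2)) ^ 2 * (1 - θ ^ 2))⁻¹) ^ 2)
      = 1 / 2 := by
  set v := deriv u with hvdef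
  have hk : (0:ℝ) < -κ := by linarith
  have hκ0 : κ ≠ 0 := ne_of_lt hκ
  have hucont : ContinuousOn u (Icc 0 1) :=
    fun x hx => (hdu x hx).continuousAt.continuousWithinAt
  have hvcont : ContinuousOn v (Icc 0 1) :=
    fun x hx => (hdv x hx).continuousAt.continuousWithinAt
  -- energy
  set E : ℝ → ℝ :=
    fun y => (-1/κ) * (1 + κ * v y ^ 2) ^ (-(1:ℝ)/2) + lam/2 * (u y) ^ 2 with hEdef
  have hE0 : ∀ x ∈ Icc (0:ℝ) 1, HasDerivAt E 0 x := by
    intro x hx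
    have hw : 0 < 1 + κ * v x ^ 2 := hwpos x hx
    have hux : HasDerivAt u (v x) x := (hdu x hx).hasDerivAt
    have hvx : HasDerivAt v (deriv v x) x := (hdv x hx).hasDerivAt
    have hwx : HasDerivAt (fun y => 1 + κ * v y ^ 2)
        (κ * (2 * v x ^ 1 * deriv v x)) x := ((hvx.pow 2).const_mul κ).const_add 1
    have hout := Real.hasDerivAt_rpow_const (x := 1 + κ * v x ^ 2) (p := -(1:ℝ)/2)
      (Or.inl hw.ne')
    have hcomp := hout.comp x hwx
    have hEd := (hcomp.const_mul (-1/κ)).add ((hux.pow 2).const_mul (lam/2))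
    have hode' : deriv v x = -(lam * u x * (1 + κ * v x ^ 2) ^ ((3:ℝ)/2)) := by
      have h := hode x hx
      linarith [h]
    have hpow : (1 + κ * v x ^ 2) ^ (-3 / 2 : ℝ) * (1 + κ * v x ^ 2) ^ ((3:ℝ)/2) = 1 := by
      rw [← Real.rpow_add hw]; norm_num
    convert hEd using 1
    · rfl
    · rfl
    · rfl
    rw [hode']
    push_cast
    norm_num
    field_simp
    rw [show (-(3/2):ℝ) = -3/2 by norm_num]
    linear_combination (lam * u x * v x) * hpow
  have hEcont : ContinuousOn E (Icc 0 1) :=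
    fun x hx => (hE0 x hx).continuousAt.continuousWithinAt
  have hEc : ∀ x ∈ Icc (0:ℝ) 1, E x = E 0 :=
    constant_of_has_deriv_right_zero hEcont
      (fun x hx => (hE0 x (Ico_subset_Icc_self hx)).hasDerivWithinAt)
  -- Rolle
  obtain ⟨x₀, hx₀, hvx₀⟩ :=
    exists_deriv_eq_zero (f := u) (by norm_num : (0:ℝ) < 1) hucont (hu0.trans hu1.symm)
  have hvx₀' : v x₀ = 0 := hvx₀
  have hx₀I : x₀ ∈ Icc (0:ℝ) 1 := ⟨hx₀.1.le, hx₀.2.le⟩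
  set M : ℝ := u x₀ with hMdef
  have hM : 0 < M := hpos x₀ hx₀
  -- strict antitonicity of v
  have hanti : StrictAntiOn v (Icc 0 1) := by
    apply strictAntiOn_of_deriv_neg (convex_Icc 0 1) hvcont
    rw [interior_Icc]
    intro x hx
    have h := hode x (Ioo_subset_Icc_self hx)
    have hupos := hpos x hx
    have hBpos : 0 < (1 + κ * v x ^ 2) ^ ((3:ℝ)/2) :=
      Real.rpow_pos_of_pos (hwpos x (Ioo_subset_Icc_self hx)) _
    have h2 : 0 < lam * u x * (1 + κ * v x ^ 2) ^ ((3:ℝ)/2) := by positivity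
    linarith [h, h2]
  have hvpos : ∀ x ∈ Icc (0:ℝ) 1, x < x₀ → 0 < v x := by
    intro x hx h
    have h1 : v x₀ < v x := hanti hx hx₀I h
    rw [hvx₀'] at h1; exact h1
  have hvneg : ∀ x ∈ Icc (0:ℝ) 1, x₀ < x → v x < 0 := by
    intro x hx h
    have h1 : v x < v x₀ := hanti hx₀I hx h
    rw [hvx₀'] at h1; exact h1
  -- energy identity in closed form
  set q : ℝ → ℝ := fun s => 1 - lam * κ / 2 * (M ^ 2 - s ^ 2) with hqdef
  have hq1 : ∀ x ∈ Icc (0:ℝ) 1, (1 + κ * v x ^ 2) ^ (-(1:ℝ)/2) = q (u x) := by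
    intro x hx
    have hEx : E x = E x₀ := (hEc x hx).trans (hEc x₀ hx₀I).symm
    have h0 : (1 + κ * v x₀ ^ 2) ^ (-(1:ℝ)/2) = 1 := by
      rw [hvx₀']; norm_num
    rw [hEdef] at hEx
    simp only at hEx
    rw [h0] at hEx
    show _ = 1 - lam * κ / 2 * (M ^ 2 - u x ^ 2)
    rw [hMdef]
    rw [show (-(1:ℝ)/2) = -(1/2) by norm_num]
    field_simp at hEx
    linear_combination (-1/2) * hEx
  have hqpos : ∀ x ∈ Icc (0:ℝ) 1, 0 < q (u x) := by
    intro x hx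
    rw [← hq1 x hx]
    exact Real.rpow_pos_of_pos (hwpos x hx) _
  have hw_eq : ∀ x ∈ Icc (0:ℝ) 1, 1 + κ * v x ^ 2 = ((q (u x))⁻¹) ^ 2 := by
    intro x hx
    have hw := hwpos x hx
    have h2 : ((1 + κ * v x ^ 2) ^ (-(1:ℝ)/2)) ^ (2:ℕ) = (1 + κ * v x ^ 2)⁻¹ := by
      rw [← Real.rpow_natCast ((1 + κ * v x ^ 2) ^ (-(1:ℝ)/2)) 2, ← Real.rpow_mul hw.le]
      norm_num
      exact Real.rpow_neg_one _
    rw [hq1 x hx] at h2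
    have h3 : ((q (u x)) ^ 2)⁻¹ = 1 + κ * v x ^ 2 := by rw [h2, inv_inv]
    rw [← h3, inv_pow]
  have hv2 : ∀ x ∈ Icc (0:ℝ) 1, (-κ) * v x ^ 2 = 1 - ((q (u x))⁻¹) ^ 2 := by
    intro x hx
    have := hw_eq x hx
    linarith
  have hu_nonneg : ∀ x ∈ Icc (0:ℝ) 1, 0 ≤ u x := by
    intro x hx
    rcases eq_or_lt_of_le hx.1 with h | h
    · rw [← h, hu0]
    rcases eq_or_lt_of_le hx.2 with h' | h'
    · rw [h', hu1]
    · exact (hpos x ⟨h, h'⟩).le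
  have hq_gt1 : ∀ x ∈ Icc (0:ℝ) 1, v x ≠ 0 → 1 < q (u x) := by
    intro x hx hvne
    have h1 := hv2 x hx
    have h2 := hqpos x hx
    have h3 : 0 < (-κ) * v x ^ 2 :=
      mul_pos hk ((sq_nonneg (v x)).lt_of_ne' (by simpa using hvne))
    by_contra h
    push_neg at h
    have h4 : 1 ≤ (q (u x))⁻¹ := by
      rw [le_inv_comm₀ one_pos h2]; simpa using h
    nlinarith
  have hq_ge1 : ∀ x ∈ Icc (0:ℝ) 1, 1 ≤ q (u x) := by
    intro x hx
    rcases eq_or_ne (v x) 0 with h | h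
    · have h1 := hv2 x hx
      rw [h] at h1
      have h2 := hqpos x hx
      have h3 : ((q (u x))⁻¹) ^ 2 = 1 := by nlinarith
      have h4 : (q (u x))⁻¹ = 1 := by
        nlinarith [inv_pos.2 h2]
      have := congrArg (·⁻¹) h4
      simpa using this.symm.le
    · exact (hq_gt1 x hx h).le
  have hu_le : ∀ x ∈ Icc (0:ℝ) 1, u x ≤ M := by
    intro x hx
    have h1 := hq_ge1 x hx
    rw [hqdef] at h1
    simp only at h1
    have h2 : 0 ≤ M ^ 2 - u x ^ 2 := by nlinarith [mul_pos hlam hk]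
    nlinarith [hu_nonneg x hx, hM]
  have hu_lt : ∀ x ∈ Icc (0:ℝ) 1, v x ≠ 0 → u x < M := by
    intro x hx hvne
    have h1 := hq_gt1 x hx hvne
    rw [hqdef] at h1
    simp only at h1
    have h2 : 0 < M ^ 2 - u x ^ 2 := by nlinarith [mul_pos hlam hk]
    nlinarith [hu_nonneg x hx, hM]
  -- the integrand and its primitive
  have hb : lam * κ / 2 < 0 := by nlinarith
  set F₀ : ℝ → ℝ :=
    fun θ => M / Real.sqrt (1 - ((1 - lam * κ / 2 * (M ^ 2 - (M * θ) ^ 2))⁻¹) ^ 2) with hF₀def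
  have hF0int : IntervalIntegrable F₀ volume 0 1 := auxFint (lam * κ / 2) M hb hM
  have hF0cont : ContinuousOn F₀ (Ioo (-1 : ℝ) 1) := auxFcont (lam * κ / 2) M hb hM
  have hFint : IntervalIntegrable (fun θ => Real.sqrt (-κ) * F₀ θ) volume 0 1 :=
    hF0int.const_mul _
  have hFcont : ContinuousOn (fun θ => Real.sqrt (-κ) * F₀ θ) (Ioo (-1 : ℝ) 1) :=
    continuousOn_const.mul hF0cont
  set Iprim : ℝ → ℝ := fun t => ∫ θ in (0:ℝ)..t, Real.sqrt (-κ) * F₀ θ with hIdef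
  have hIcont : ContinuousOn Iprim (Icc (0:ℝ) 1) := by
    have h := intervalIntegral.continuousOn_primitive_interval' hFint left_mem_uIcc
    rw [Set.uIcc_of_le (by norm_num : (0:ℝ) ≤ 1)] at h
    exact h
  have hIHD : ∀ s ∈ Ico (0:ℝ) 1, HasDerivAt Iprim (Real.sqrt (-κ) * F₀ s) s := by
    intro s hs
    have hmem : s ∈ Ioo (-1 : ℝ) 1 := ⟨by linarith [hs.1], hs.2⟩
    have hsub : IntervalIntegrable (fun θ => Real.sqrt (-κ) * F₀ θ) volume 0 s := by
      apply hFint.mono_set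
      rw [Set.uIcc_of_le hs.1, Set.uIcc_of_le (by norm_num : (0:ℝ) ≤ 1)]
      exact Icc_subset_Icc le_rfl hs.2.le
    exact intervalIntegral.integral_hasDerivAt_right hsub
      (hFcont.stronglyMeasurableAtFilter isOpen_Ioo s hmem)
      (hFcont.continuousAt (isOpen_Ioo.mem_nhds hmem))
  set G : ℝ → ℝ := fun x => Iprim (u x / M) with hGdef
  have hmapsto : ∀ x ∈ Icc (0:ℝ) 1, u x / M ∈ Icc (0:ℝ) 1 := fun x hx =>
    ⟨div_nonneg (hu_nonneg x hx) hM.le, (div_le_one hM).2 (hu_le x hx)⟩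
  have hGcont : ContinuousOn G (Icc (0:ℝ) 1) :=
    hIcont.comp (hucont.div_const M) hmapsto
  have hv2' : ∀ x ∈ Icc (0:ℝ) 1,
      (-κ) * v x ^ 2 = 1 - ((1 - lam * κ / 2 * (M ^ 2 - u x ^ 2))⁻¹) ^ 2 := by
    intro x hx
    have h := hv2 x hx
    rw [hqdef] at h
    simpa using h
  have hGd : ∀ x ∈ Icc (0:ℝ) 1, v x ≠ 0 → HasDerivAt G (v x / |v x|) x := by
    intro x hx hvne
    have hs : u x / M ∈ Ico (0:ℝ) 1 :=
      ⟨div_nonneg (hu_nonneg x hx) hM.le, (div_lt_one hM).2 (hu_lt x hx hvne)⟩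
    have h1 := hIHD _ hs
    have h2 : HasDerivAt (fun y => u y / M) (v x / M) x := (hdu x hx).hasDerivAt.div_const M
    have h3 := h1.comp x h2
    convert h3 using 1
    · rfl
    · rfl
    · rfl
    have hMu : M * (u x / M) = u x := mul_div_cancel₀ _ hM.ne'
    have hF0val : F₀ (u x / M) = M / Real.sqrt ((-κ) * v x ^ 2) := by
      rw [hF₀def]
      simp only
      rw [hMu, ← hv2' x hx]
    show v x / |v x| = Real.sqrt (-κ) * F₀ (u x / M) * (v x / M)
    rw [hF0val, Real.sqrt_mul hk.le, Real.sqrt_sq_eq_abs]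
    have hsk : 0 < Real.sqrt (-κ) := Real.sqrt_pos.2 hk
    have habs : |v x| ≠ 0 := abs_ne_zero.2 hvne
    field_simp
  -- left half
  have hleft : ∀ z ∈ Icc (0:ℝ) x₀, G z = z := by
    apply eq_of_has_deriv_right_eq (f' := fun _ => (1:ℝ))
    · intro x hx
      have hxI : x ∈ Icc (0:ℝ) 1 := ⟨hx.1, hx.2.le.trans hx₀.2.le⟩
      have hvp : 0 < v x := hvpos x hxI hx.2
      have h := hGd x hxI hvp.ne'
      rw [abs_of_pos hvp, div_self hvp.ne'] at h
      exact h.hasDerivWithinAt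
    · intro x _
      exact (hasDerivAt_id x).hasDerivWithinAt
    · exact hGcont.mono (Icc_subset_Icc le_rfl hx₀.2.le)
    · exact continuousOn_id
    · rw [hGdef]
      simp only [hu0, zero_div]
      rw [hIdef]
      simp [intervalIntegral.integral_same]
  have hIx₀ : Iprim 1 = x₀ := by
    have h := hleft x₀ (right_mem_Icc.2 hx₀.1.le)
    rw [hGdef] at h
    simp only at h
    rw [← hMdef, div_self hM.ne'] at h
    exact h
  -- right half
  have hright : ∀ y ∈ Ioo x₀ 1, G y = 1 - y := by
    intro y hy
    have hy0 : 0 < y := hx₀.1.trans hy.1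
    have key : ∀ z ∈ Icc y 1, G z = G y - (z - y) := by
      apply eq_of_has_deriv_right_eq (f' := fun _ => (-1:ℝ))
      · intro x hx
        have hxI : x ∈ Icc (0:ℝ) 1 := ⟨hy0.le.trans hx.1, hx.2.le⟩
        have hvn : v x < 0 := hvneg x hxI (hy.1.trans_le hx.1)
        have h := hGd x hxI hvn.ne
        rw [abs_of_neg hvn, div_neg, div_self hvn.ne] at h
        exact h.hasDerivWithinAt
      · intro x _
        have : HasDerivAt (fun t => G y - (t - y)) (-1) x := by
          simpa using ((hasDerivAt_id x).sub_const y).const_sub (G y)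
        exact this.hasDerivWithinAt
      · exact hGcont.mono (Icc_subset_Icc hy0.le le_rfl)
      · fun_prop
      · simp
    have h1 := key 1 (right_mem_Icc.2 hy.2.le)
    have hG1 : G 1 = 0 := by
      rw [hGdef]
      simp only [hu1, zero_div]
      rw [hIdef]
      simp [intervalIntegral.integral_same]
    rw [hG1] at h1
    linarith [h1]
  -- limit from the right at x₀
  have hx₀half : x₀ = 1/2 := by
    have hfil : 𝓝[Ioo x₀ 1] x₀ = 𝓝[>] x₀ := nhdsWithin_Ioo_eq_nhdsGT hx₀.2
    have hne : (𝓝[Ioo x₀ 1] x₀).NeBot := by rw [hfil]; infer_instance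
    have ht1 : Tendsto G (𝓝[Ioo x₀ 1] x₀) (𝓝 (G x₀)) :=
      (hGcont x₀ hx₀I).mono (Ioo_subset_Icc_self.trans (Icc_subset_Icc hx₀.1.le le_rfl))
    have ht2 : Tendsto (fun y : ℝ => 1 - y) (𝓝[Ioo x₀ 1] x₀) (𝓝 (1 - x₀)) :=
      ((continuous_const.sub continuous_id).tendsto x₀).mono_left nhdsWithin_le_nhds
    have heqf : G =ᶠ[𝓝[Ioo x₀ 1] x₀] fun y => 1 - y :=
      eventually_of_mem self_mem_nhdsWithin (fun y hy => hright y hy)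
    have huniq : G x₀ = 1 - x₀ := tendsto_nhds_unique (ht1.congr' heqf) ht2
    have hGx₀ : G x₀ = x₀ := by
      rw [hGdef]
      simp only
      rw [← hMdef, div_self hM.ne']
      exact hIx₀
    linarith [huniq, hGx₀]
  -- conclusion
  have huhalf : u (1/2) = M := by rw [hMdef, hx₀half]
  rw [huhalf]
  have hJ : (∫ θ in (0:ℝ)..1,
      M / Real.sqrt (1 - ((1 - lam * κ / 2 * M ^ 2 * (1 - θ ^ 2))⁻¹) ^ 2)) =
      ∫ θ in (0:ℝ)..1, F₀ θ := by
    apply intervalIntegral.integral_congr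
    intro θ _
    rw [hF₀def]
    simp only
    rw [show 1 - lam * κ / 2 * M ^ 2 * (1 - θ ^ 2)
        = 1 - lam * κ / 2 * (M ^ 2 - (M * θ) ^ 2) by ring]
  rw [hJ]
  have hfin : Real.sqrt (-κ) * ∫ θ in (0:ℝ)..1, F₀ θ = Iprim 1 := by
    rw [hIdef]
    simp only
    rw [intervalIntegral.integral_const_mul]
  rw [hfin, hIx₀, hx₀half]

theorem stmt17 (κ lam : ℝ) (hκ : κ < 0) (hlam : 0 < lam) (u : ℝ → ℝ)
    (hu : SolP κ lam u) (hpos : ∀ x ∈ Set.Ioo (0 : ℝ) 1, 0 < u x) :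
    Jmap κ lam (u (1 / 2)) = 1 / 2 := by
  obtain ⟨⟨hdu, hdv, _, hwpos, hode⟩, hu0, hu1⟩ := hu
  have h := stmt17' κ lam hκ hlam u hdu hdv hwpos hode hu0 hu1 hpos
  unfold Jmap
  norm_num at h ⊢
  exact h
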